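/- Fix the PVBS model in dimension d = 2 with n ≥ 1 species. If 0 < δ < (1 − 3/(16n))/(96 n² (16n+1)²) and the anisotropy parameters satisfy (1/2)δ^i ≤ λ_i^{(k)} ≤ 2δ^i for all 1 ≤ i ≤ n and k ∈ {1,2}, then the PVBS Hamiltonian H_L is gapped, i.e., inf_{L ≥ 2} γ_L > 0. -/

import Mathlib

open scoped BigOperators ComplexOrder Matrix

namespace PVBS

/-- The standard basis vector `|a ⊗ b⟩` of `ℂ^{n+1} ⊗ ℂ^{n+1}`
(realized as functions on `Fin (n+1) × Fin (n+1)`). -/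
def ketPair {n : ℕ} (a b : Fin (n + 1)) : Fin (n + 1) × Fin (n + 1) → ℂ :=
  fun p => if p = (a, b) then 1 else 0

/-- The orthogonal projection onto the span of the vector `v` (interpreted as `0` if `v = 0`). -/
noncomputable def projOnto {P : Type*} [Fintype P] (v : P → ℂ) : Matrix P P ℂ :=
  ((∑ p, Complex.normSq (v p) : ℝ) : ℂ)⁻¹ • Matrix.of fun a b => v a * (starRingEnd ℂ) (v b)

/-- The vector `φ_i = |0 ⊗ i⟩ − λ_i |i ⊗ 0⟩` (the species `1 ≤ i ≤ n` is encoded as `i : Fin n`,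
with corresponding basis element `i.succ : Fin (n+1)`). -/
def phiA {n : ℕ} (lam : ℝ) (i : Fin n) : Fin (n + 1) × Fin (n + 1) → ℂ :=
  fun p => ketPair 0 i.succ p - (lam : ℂ) * ketPair i.succ 0 p

/-- The vector `φ_{ij} = λ_i |i ⊗ j⟩ − λ_j |j ⊗ i⟩` for `i < j`. -/
def phiB {n : ℕ} (lami lamj : ℝ) (i j : Fin n) : Fin (n + 1) × Fin (n + 1) → ℂ :=
  fun p => (lami : ℂ) * ketPair i.succ j.succ p - (lamj : ℂ) * ketPair j.succ i.succ p

/-- The vector `φ_{ii} = |i ⊗ i⟩`. -/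
def phiC {n : ℕ} (i : Fin n) : Fin (n + 1) × Fin (n + 1) → ℂ := ketPair i.succ i.succ

/-- The local PVBS interaction `h^{(k)}` in a fixed direction `k`, built from the anisotropy
parameters `lam i = λ_{i+1}^{(k)}`: the sum of the orthogonal projections onto the normalized
versions of the vectors `φ_i` (for `1 ≤ i ≤ n`) and `φ_{ij}` (for `1 ≤ i ≤ j ≤ n`). -/
noncomputable def hloc {n : ℕ} (lam : Fin n → ℝ) :
    Matrix (Fin (n + 1) × Fin (n + 1)) (Fin (n + 1) × Fin (n + 1)) ℂ :=
  (∑ i, projOnto (phiA (lam i) i)) +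
    ∑ i, ∑ j,
      if i < j then projOnto (phiB (lam i) (lam j) i j)
      else if i = j then projOnto (phiC i) else 0

/-- The reference interaction `h̃ = Σ_{i=1}^n |0⊗i⟩⟨0⊗i| + Σ_{1≤i≤j≤n} |i⊗j⟩⟨i⊗j|`
(the `δ = 0` model). -/
noncomputable def htilde (n : ℕ) :
    Matrix (Fin (n + 1) × Fin (n + 1)) (Fin (n + 1) × Fin (n + 1)) ℂ :=
  (∑ i : Fin n, projOnto (ketPair 0 i.succ)) +
    ∑ i : Fin n, ∑ j : Fin n, if i ≤ j then projOnto (ketPair i.succ j.succ) else 0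

/-- The embedding of a two-site operator `h2` at the ordered pair of sites `(x, y)` of `V`,
acting as the identity on all other sites. -/
def embed {n : ℕ} {V : Type*} [Fintype V] [DecidableEq V] (x y : V)
    (h2 : Matrix (Fin (n + 1) × Fin (n + 1)) (Fin (n + 1) × Fin (n + 1)) ℂ) :
    Matrix (V → Fin (n + 1)) (V → Fin (n + 1)) ℂ :=
  Matrix.of fun σ τ =>
    if ∀ z, z ≠ x → z ≠ y → σ z = τ z then h2 (σ x, σ y) (τ x, τ y) else 0

/-- The spectral gap of a matrix: the smallest positive (real) element of its spectrum
(by convention `sInf ∅ = 0` if there is none). -/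
noncomputable def gap {I : Type*} [Fintype I] [DecidableEq I] (M : Matrix I I ℂ) : ℝ :=
  sInf {γ : ℝ | 0 < γ ∧ (γ : ℂ) ∈ spectrum ℂ M}

/-! ### The periodic box `Λ_L = (ZMod N)^d`, `N = 2L`. -/

/-- The neighbor `x + e_k` of the site `x` on the torus `(ZMod N)^d`. -/
def nbrT {d N : ℕ} (x : Fin d → ZMod N) (k : Fin d) : Fin d → ZMod N :=
  fun j => if j = k then x j + 1 else x j

/-- The interaction term `h_e = h^{(k)}_{x, x+e_k}` attached to the oriented edge
`e = (x, k)` of the torus. -/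
noncomputable def hedge {n d N : ℕ} [NeZero N] (lam : Fin n → Fin d → ℝ)
    (e : (Fin d → ZMod N) × Fin d) :
    Matrix ((Fin d → ZMod N) → Fin (n + 1)) ((Fin d → ZMod N) → Fin (n + 1)) ℂ :=
  embed e.1 (nbrT e.1 e.2) (hloc fun i => lam i e.2)

/-- The PVBS Hamiltonian `H_L = Σ_{x ∈ Λ_L} Σ_{k=1}^d h^{(k)}_{x,x+e_k}` on the periodic
box `Λ_L = (ZMod N)^d` with `N = 2L`. -/
noncomputable def HL (n d N : ℕ) [NeZero N] (lam : Fin n → Fin d → ℝ) :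
    Matrix ((Fin d → ZMod N) → Fin (n + 1)) ((Fin d → ZMod N) → Fin (n + 1)) ℂ :=
  ∑ e : (Fin d → ZMod N) × Fin d, hedge lam e

/-- The (unordered) endpoints of the oriented torus edge `e = (x, k)`. -/
def epT {d N : ℕ} (e : (Fin d → ZMod N) × Fin d) : Finset (Fin d → ZMod N) :=
  {e.1, nbrT e.1 e.2}

/-- `Q = Σ_{e ∼ e'} {h_e, h_{e'}}`: the sum over (unordered) pairs of torus edges sharing
exactly one vertex of the anticommutator `{h_e, h_{e'}}`, written as a sum of the products
`h_e * h_{e'}` over ordered pairs. -/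
noncomputable def QL (n d N : ℕ) [NeZero N] (lam : Fin n → Fin d → ℝ) :
    Matrix ((Fin d → ZMod N) → Fin (n + 1)) ((Fin d → ZMod N) → Fin (n + 1)) ℂ :=
  ∑ e : (Fin d → ZMod N) × Fin d, ∑ e' : (Fin d → ZMod N) × Fin d,
    if (epT e ∩ epT e').card = 1 then hedge lam e * hedge lam e' else 0

/-- `R = Σ_{e ≁ e'} {h_e, h_{e'}}`: the sum over (unordered) pairs of torus edges sharing
no vertex of the anticommutator `{h_e, h_{e'}}`, written as a sum of the products
`h_e * h_{e'}` over ordered pairs. -/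
noncomputable def RL (n d N : ℕ) [NeZero N] (lam : Fin n → Fin d → ℝ) :
    Matrix ((Fin d → ZMod N) → Fin (n + 1)) ((Fin d → ZMod N) → Fin (n + 1)) ℂ :=
  ∑ e : (Fin d → ZMod N) × Fin d, ∑ e' : (Fin d → ZMod N) × Fin d,
    if (epT e ∩ epT e').card = 0 then hedge lam e * hedge lam e' else 0

/-! ### Subgraphs of `ℤ^d` and the box on a stick `C_m`. -/

/-- The neighbor `x + e_k` of the site `x ∈ ℤ^d`. -/
def nbrZ {d : ℕ} (x : Fin d → ℤ) (k : Fin d) : Fin d → ℤ :=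
  fun j => if j = k then x j + 1 else x j

/-- The point `l·e_1 ∈ ℤ^d`. -/
def stickPt (d : ℕ) (l : ℕ) : Fin d → ℤ := fun k => if (k : ℕ) = 0 then (l : ℤ) else 0

/-- The stick `S = {0, e_1, …, (n−1)e_1} ⊂ ℤ^d`. -/
def stickF (d n : ℕ) : Finset (Fin d → ℤ) := (Finset.range n).image (stickPt d)

/-- The box `B_m = {Σ a_k e_k : n ≤ a_1 ≤ m+n, 0 ≤ a_k ≤ m for k ≥ 2} ⊂ ℤ^d`. -/
def boxF (d n m : ℕ) : Finset (Fin d → ℤ) :=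
  Finset.image
    (fun a : Fin d → Fin (m + 1) => fun k : Fin d =>
      if (k : ℕ) = 0 then (n : ℤ) + (a k : ℤ) else (a k : ℤ))
    Finset.univ

/-- The box on a stick `C_m = S ∪ B_m ⊂ ℤ^d`. -/
def CmF (d n m : ℕ) : Finset (Fin d → ℤ) := stickF d n ∪ boxF d n m

/-- The PVBS subsystem Hamiltonian `H_G = Σ_{e ∈ E_G} h_e` of a finite subgraph
`G ⊂ ℤ^d` (with one interaction term for every oriented lattice edge with both endpoints
in `G`), acting on `⊗_{x ∈ G} ℂ^{n+1}`. -/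
noncomputable def HG {d : ℕ} (n : ℕ) (lam : Fin n → Fin d → ℝ) (G : Finset (Fin d → ℤ)) :
    Matrix ({x // x ∈ G} → Fin (n + 1)) ({x // x ∈ G} → Fin (n + 1)) ℂ :=
  ∑ x : {x // x ∈ G}, ∑ k : Fin d,
    if h : nbrZ (x : Fin d → ℤ) k ∈ G then
      embed x ⟨nbrZ (x : Fin d → ℤ) k, h⟩ (hloc fun i => lam i k)
    else 0

/-- The PVBS Hamiltonian `H_{C_m}` of the box on a stick. -/
noncomputable def HCm (d n m : ℕ) (lam : Fin n → Fin d → ℝ) :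
    Matrix ({x // x ∈ CmF d n m} → Fin (n + 1)) ({x // x ∈ CmF d n m} → Fin (n + 1)) ℂ :=
  HG n lam (CmF d n m)

/-- The reference (`δ = 0`) Hamiltonian `H̃_G = Σ_{e ∈ E_G} h̃_e` of a finite subgraph
`G ⊂ ℤ^d`. -/
noncomputable def HtildeG {d : ℕ} (n : ℕ) (G : Finset (Fin d → ℤ)) :
    Matrix ({x // x ∈ G} → Fin (n + 1)) ({x // x ∈ G} → Fin (n + 1)) ℂ :=
  ∑ x : {x // x ∈ G}, ∑ k : Fin d,
    if h : nbrZ (x : Fin d → ℤ) k ∈ G then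
      embed x ⟨nbrZ (x : Fin d → ℤ) k, h⟩ (htilde n)
    else 0

/-! ### Translates `x + C_m` inside the torus. -/

/-- The interaction term of the lattice edge `(c, c + e_k)` of `ℤ^d`, translated by
`x` into the torus `(ZMod N)^d` (reducing coordinates mod `N`). -/
noncomputable def hedgeTrans {n d N : ℕ} [NeZero N] (lam : Fin n → Fin d → ℝ)
    (x : Fin d → ZMod N) (c : Fin d → ℤ) (k : Fin d) :
    Matrix ((Fin d → ZMod N) → Fin (n + 1)) ((Fin d → ZMod N) → Fin (n + 1)) ℂ :=
  embed (fun j => x j + (c j : ZMod N)) (fun j => x j + ((nbrZ c k) j : ZMod N))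
    (hloc fun i => lam i k)

/-- The subsystem Hamiltonian `H_{x+C_m}` of the translate `x + C_m ⊂ Λ_L`, acting on the
full torus Hilbert space. -/
noncomputable def HtransCm (n d N m : ℕ) [NeZero N] (lam : Fin n → Fin d → ℝ)
    (x : Fin d → ZMod N) :
    Matrix ((Fin d → ZMod N) → Fin (n + 1)) ((Fin d → ZMod N) → Fin (n + 1)) ℂ :=
  ∑ c : {y // y ∈ CmF d n m}, ∑ k : Fin d,
    if nbrZ (c : Fin d → ℤ) k ∈ CmF d n m then hedgeTrans lam x (c : Fin d → ℤ) k else 0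

/-- The (unordered) endpoints of the oriented lattice edge `(c, c + e_k)` of `ℤ^d`. -/
def epZ {d : ℕ} (c : Fin d → ℤ) (k : Fin d) : Finset (Fin d → ℤ) := {c, nbrZ c k}

/-- `Q_{x+C_m}`: the sum of the anticommutators `{h_e, h_{e'}}` over (unordered) pairs of
edges of `x + C_m` sharing exactly one vertex, written as a sum of products over ordered
pairs. -/
noncomputable def QtransCm (n d N m : ℕ) [NeZero N] (lam : Fin n → Fin d → ℝ)
    (x : Fin d → ZMod N) :
    Matrix ((Fin d → ZMod N) → Fin (n + 1)) ((Fin d → ZMod N) → Fin (n + 1)) ℂ :=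
  ∑ c : {y // y ∈ CmF d n m}, ∑ k : Fin d,
    ∑ c' : {y // y ∈ CmF d n m}, ∑ k' : Fin d,
      if nbrZ (c : Fin d → ℤ) k ∈ CmF d n m ∧ nbrZ (c' : Fin d → ℤ) k' ∈ CmF d n m ∧
          (epZ (c : Fin d → ℤ) k ∩ epZ (c' : Fin d → ℤ) k').card = 1 then
        hedgeTrans lam x (c : Fin d → ℤ) k * hedgeTrans lam x (c' : Fin d → ℤ) k'
      else 0

/-- `R_{x+C_m}`: the sum of the anticommutators `{h_e, h_{e'}}` over (unordered) pairs of
vertex-disjoint edges of `x + C_m`, written as a sum of products over ordered pairs. -/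
noncomputable def RtransCm (n d N m : ℕ) [NeZero N] (lam : Fin n → Fin d → ℝ)
    (x : Fin d → ZMod N) :
    Matrix ((Fin d → ZMod N) → Fin (n + 1)) ((Fin d → ZMod N) → Fin (n + 1)) ℂ :=
  ∑ c : {y // y ∈ CmF d n m}, ∑ k : Fin d,
    ∑ c' : {y // y ∈ CmF d n m}, ∑ k' : Fin d,
      if nbrZ (c : Fin d → ℤ) k ∈ CmF d n m ∧ nbrZ (c' : Fin d → ℤ) k' ∈ CmF d n m ∧
          (epZ (c : Fin d → ℤ) k ∩ epZ (c' : Fin d → ℤ) k').card = 0 then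
        hedgeTrans lam x (c : Fin d → ℤ) k * hedgeTrans lam x (c' : Fin d → ℤ) k'
      else 0

/-- The particle number operator `N_i` of species `1 ≤ i ≤ n` on `⊗_{x ∈ G} ℂ^{n+1}`:
diagonal in the product basis, counting the sites carrying the label `i`. -/
noncomputable def Nop {d : ℕ} {n : ℕ} (G : Finset (Fin d → ℤ)) (i : Fin n) :
    Matrix ({x // x ∈ G} → Fin (n + 1)) ({x // x ∈ G} → Fin (n + 1)) ℂ :=
  Matrix.diagonal fun σ => ((Finset.univ.filter fun x => σ x = i.succ).card : ℂ)

/-- The product basis vector of `⊗_{x} ℂ^{n+1}` labelled by the configuration `σ`. -/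
def bvec {I : Type*} [DecidableEq I] (σ : I) : I → ℂ := fun τ => if τ = σ then 1 else 0

/-! ### Auxiliary lemmas -/

section Aux

open Finset

lemma projOnto_apply {P : Type*} [Fintype P] (v : P → ℂ) (p q : P) :
    projOnto v p q = (((∑ r, Complex.normSq (v r) : ℝ) : ℂ))⁻¹ * (v p * (starRingEnd ℂ) (v q)) := rfl

lemma pairAB_ne {n : ℕ} (i : Fin n) :
    ((0 : Fin (n+1)), i.succ) ≠ (i.succ, (0 : Fin (n+1))) := by
  intro h
  exact (Fin.succ_ne_zero i) (congrArg Prod.fst h).symm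

lemma pairBB_ne {n : ℕ} {i j : Fin n} (hij : i ≠ j) :
    ((i.succ : Fin (n+1)), j.succ) ≠ (j.succ, (i.succ : Fin (n+1))) := by
  intro h
  exact hij (Fin.succ_injective n (congrArg Prod.fst h))

lemma phiA_apply {n : ℕ} (lam : ℝ) (i : Fin n) (p : Fin (n+1) × Fin (n+1)) :
    phiA lam i p = if p = (0, i.succ) then 1 else if p = (i.succ, 0) then -(lam:ℂ) else 0 := by
  unfold phiA ketPair
  split_ifs with h1 h2 <;> try ring_nf
  subst h1; exact absurd h2 (pairAB_ne i)

lemma phiB_apply {n : ℕ} (li lj : ℝ) {i j : Fin n} (hij : i ≠ j) (p : Fin (n+1) × Fin (n+1)) :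
    phiB li lj i j p = if p = (i.succ, j.succ) then (li:ℂ)
      else if p = (j.succ, i.succ) then -(lj:ℂ) else 0 := by
  unfold phiB ketPair
  split_ifs with h1 h2 <;> try ring_nf
  subst h1; exact absurd h2 (pairBB_ne hij)

lemma phiC_apply {n : ℕ} (i : Fin n) (p : Fin (n+1) × Fin (n+1)) :
    phiC i p = if p = (i.succ, i.succ) then 1 else 0 := rfl

lemma sum_normSq_phiA {n : ℕ} (lam : ℝ) (i : Fin n) :
    (∑ p, Complex.normSq (phiA lam i p)) = 1 + lam^2 := by
  have h : ∀ p, Complex.normSq (phiA lam i p)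
      = (if p = ((0 : Fin (n+1)), i.succ) then 1 else 0)
        + (if p = (i.succ, (0:Fin (n+1))) then lam^2 else 0) := by
    intro p
    rw [phiA_apply]
    split_ifs with h1 h2
    · subst h1; exact absurd h2 (pairAB_ne i)
    · simp
    · simp [Complex.normSq_ofReal, sq]
    · simp
  simp [h, Finset.sum_add_distrib]

lemma sum_normSq_phiB {n : ℕ} (li lj : ℝ) {i j : Fin n} (hij : i ≠ j) :
    (∑ p, Complex.normSq (phiB li lj i j p)) = li^2 + lj^2 := by
  have h : ∀ p, Complex.normSq (phiB li lj i j p)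
      = (if p = ((i.succ : Fin (n+1)), j.succ) then li^2 else 0)
        + (if p = ((j.succ : Fin (n+1)), i.succ) then lj^2 else 0) := by
    intro p
    rw [phiB_apply li lj hij]
    split_ifs with h1 h2
    · subst h1; exact absurd h2 (pairBB_ne hij)
    · simp [Complex.normSq_ofReal, sq]
    · simp [Complex.normSq_ofReal, sq]
    · simp
  simp [h, Finset.sum_add_distrib]

lemma sum_normSq_phiC {n : ℕ} (i : Fin n) :
    (∑ p, Complex.normSq (phiC i p)) = 1 := by
  have h : ∀ p, Complex.normSq (phiC i p)
      = (if p = ((i.succ : Fin (n+1)), i.succ) then 1 else 0) := by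
    intro p
    unfold phiC ketPair
    split_ifs <;> simp
  simp [h]

lemma projOnto_isHermitian {P : Type*} [Fintype P] (v : P → ℂ) : (projOnto v).IsHermitian := by
  apply Matrix.IsHermitian.ext
  intro p q
  rw [projOnto_apply, projOnto_apply]
  rw [star_mul', star_mul']
  simp only [RingHomCompTriple.comp_apply, RingHom.id_apply, star_inv₀]
  rw [show star (((∑ r, Complex.normSq (v r) : ℝ) : ℂ)) = ((∑ r, Complex.normSq (v r) : ℝ) : ℂ) from
    Complex.conj_ofReal _]
  ring_nf
  simp [mul_comm]
  ring

lemma projOnto_diag {P : Type*} [Fintype P] (v : P → ℂ) (p : P) :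
    projOnto v p p = ((((∑ r, Complex.normSq (v r))⁻¹ * Complex.normSq (v p) : ℝ)) : ℂ) := by
  rw [projOnto_apply, Complex.mul_conj]
  push_cast
  ring

lemma projOnto_diag_re_nonneg {P : Type*} [Fintype P] (v : P → ℂ) (p : P) :
    0 ≤ (projOnto v p p).re := by
  rw [projOnto_diag, Complex.ofReal_re]
  have h1 : 0 ≤ (∑ r, Complex.normSq (v r)) := Finset.sum_nonneg fun r _ => Complex.normSq_nonneg _
  exact mul_nonneg (inv_nonneg.mpr h1) (Complex.normSq_nonneg _)

lemma projOnto_norm_le {P : Type*} [Fintype P] (v : P → ℂ) (p q : P) :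
    ‖projOnto v p q‖ ≤ (∑ r, Complex.normSq (v r))⁻¹ * (‖v p‖ * ‖v q‖) := by
  rw [projOnto_apply, norm_mul, norm_mul]
  have h1 : 0 ≤ (∑ r, Complex.normSq (v r)) := Finset.sum_nonneg fun r _ => Complex.normSq_nonneg _
  rw [norm_inv, Complex.norm_real, Real.norm_eq_abs, abs_of_nonneg h1, RCLike.norm_conj]

lemma projOnto_supp {n : ℕ} {v : Fin (n+1) × Fin (n+1) → ℂ} {u : Fin (n+1) × Fin (n+1)}
    (hv : ∀ r, v r ≠ 0 → r = u ∨ r = (u.2, u.1)) (p q : Fin (n+1) × Fin (n+1))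
    (hq1 : q ≠ p) (hq2 : q ≠ (p.2, p.1)) : projOnto v p q = 0 := by
  rw [projOnto_apply]
  rcases eq_or_ne (v p) 0 with h | h
  · simp [h]
  rcases eq_or_ne (v q) 0 with h' | h'
  · simp [h']
  exfalso
  rcases hv p h with rfl | hp
  · rcases hv q h' with h'' | h''
    · exact hq1 h''
    · exact hq2 h''
  · have hps : (p.2, p.1) = u := by
      rw [hp]
    rcases hv q h' with h'' | h''
    · exact hq2 (h''.trans hps.symm)
    · apply hq1
      rw [h'', hp]

lemma projOnto_zero_left {P : Type*} [Fintype P] {v : P → ℂ} {p : P} (h : v p = 0) (q : P) :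
    projOnto v p q = 0 := by
  rw [projOnto_apply, h]
  ring

lemma phiA_supp {n : ℕ} (lam : ℝ) (i : Fin n) :
    ∀ r, phiA lam i r ≠ 0 → r = ((0:Fin (n+1)), i.succ) ∨ r = (i.succ, (0:Fin (n+1))) := by
  intro r hr
  rw [phiA_apply] at hr
  by_contra hc
  push_neg at hc
  rw [if_neg hc.1, if_neg hc.2] at hr
  exact hr rfl

lemma phiB_supp {n : ℕ} (li lj : ℝ) {i j : Fin n} (hij : i ≠ j) :
    ∀ r, phiB li lj i j r ≠ 0 → r = ((i.succ : Fin (n+1)), j.succ)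
      ∨ r = ((j.succ : Fin (n+1)), i.succ) := by
  intro r hr
  rw [phiB_apply li lj hij] at hr
  by_contra hc
  push_neg at hc
  rw [if_neg hc.1, if_neg hc.2] at hr
  exact hr rfl

lemma phiC_supp {n : ℕ} (i : Fin n) :
    ∀ r, phiC i r ≠ 0 → r = ((i.succ : Fin (n+1)), i.succ)
      ∨ r = ((i.succ : Fin (n+1)), i.succ) := by
  intro r hr
  rw [phiC_apply] at hr
  by_contra hc
  push_neg at hc
  rw [if_neg hc.1] at hr
  exact hr rfl

lemma hloc_apply {n : ℕ} (lam : Fin n → ℝ) (p q : Fin (n+1) × Fin (n+1)) :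
    hloc lam p q = (∑ i, projOnto (phiA (lam i) i) p q) +
      ∑ i, ∑ j, (if i < j then projOnto (phiB (lam i) (lam j) i j) p q
        else if i = j then projOnto (phiC i) p q else 0) := by
  unfold hloc
  rw [Matrix.add_apply, Matrix.sum_apply, Matrix.sum_apply]
  congr 1
  refine Finset.sum_congr rfl fun i _ => ?_
  rw [Matrix.sum_apply]
  refine Finset.sum_congr rfl fun j _ => ?_
  split_ifs <;> rfl

lemma hloc_off {n : ℕ} (lam : Fin n → ℝ) (p q : Fin (n+1) × Fin (n+1))
    (hq1 : q ≠ p) (hq2 : q ≠ (p.2, p.1)) : hloc lam p q = 0 := by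
  rw [hloc_apply]
  rw [Finset.sum_eq_zero fun i _ => projOnto_supp (phiA_supp (lam i) i) p q hq1 hq2]
  rw [Finset.sum_eq_zero, add_zero]
  intro i _
  rw [Finset.sum_eq_zero]
  intro j _
  split_ifs with h1 h2
  · exact projOnto_supp (phiB_supp (lam i) (lam j) (ne_of_lt h1)) p q hq1 hq2
  · exact projOnto_supp (phiC_supp i) p q hq1 hq2
  · rfl

lemma hloc_vac {n : ℕ} (lam : Fin n → ℝ) (q : Fin (n+1) × Fin (n+1)) :
    hloc lam ((0 : Fin (n+1)), (0 : Fin (n+1))) q = 0 := by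
  rw [hloc_apply]
  have hA : ∀ i : Fin n, phiA (lam i) i ((0 : Fin (n+1)), (0 : Fin (n+1))) = 0 := by
    intro i
    rw [phiA_apply, if_neg, if_neg]
    · intro h; exact (Fin.succ_ne_zero i) (congrArg Prod.fst h).symm
    · intro h; exact (Fin.succ_ne_zero i) (congrArg Prod.snd h).symm
  have hB : ∀ i j : Fin n, phiB (lam i) (lam j) i j ((0 : Fin (n+1)), (0 : Fin (n+1))) = 0 := by
    intro i j
    unfold phiB ketPair
    rw [if_neg, if_neg]
    · ring
    · intro h; exact (Fin.succ_ne_zero j) (congrArg Prod.fst h).symm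
    · intro h; exact (Fin.succ_ne_zero i) (congrArg Prod.fst h).symm
  have hC : ∀ i : Fin n, phiC i ((0 : Fin (n+1)), (0 : Fin (n+1))) = 0 := by
    intro i
    rw [phiC_apply, if_neg]
    intro h; exact (Fin.succ_ne_zero i) (congrArg Prod.fst h).symm
  rw [Finset.sum_eq_zero fun i _ => projOnto_zero_left (hA i) q]
  rw [Finset.sum_eq_zero, add_zero]
  intro i _
  rw [Finset.sum_eq_zero]
  intro j _
  split_ifs
  · exact projOnto_zero_left (hB i j) q
  · exact projOnto_zero_left (hC i) q
  · rfl

lemma hloc_diag_re_nonneg {n : ℕ} (lam : Fin n → ℝ) (p : Fin (n+1) × Fin (n+1)) :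
    0 ≤ (hloc lam p p).re := by
  rw [hloc_apply, Complex.add_re, Complex.re_sum, Complex.re_sum]
  apply add_nonneg
  · exact Finset.sum_nonneg fun i _ => projOnto_diag_re_nonneg _ _
  · refine Finset.sum_nonneg fun i _ => ?_
    rw [Complex.re_sum]
    refine Finset.sum_nonneg fun j _ => ?_
    split_ifs
    · exact projOnto_diag_re_nonneg _ _
    · exact projOnto_diag_re_nonneg _ _
    · simp

end Aux
section Aux2

open Finset

lemma double_sum_eq {M : Type*} [AddCommMonoid M] {n : ℕ} (f : Fin n → Fin n → M) (s t : Fin n)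
    (h : ∀ i j, ¬(i = s ∧ j = t) → f i j = 0) : (∑ i, ∑ j, f i j) = f s t := by
  rw [Finset.sum_eq_single_of_mem s (Finset.mem_univ s)]
  · rw [Finset.sum_eq_single_of_mem t (Finset.mem_univ t)]
    intro j _ hj
    exact h s j (fun hc => hj hc.2)
  · intro i _ hi
    exact Finset.sum_eq_zero fun j _ => h i j (fun hc => hi hc.1)

lemma lam_pos {n : ℕ} {δ : ℝ} (hδ0 : 0 < δ) {lam : Fin n → ℝ}
    (hl : ∀ i : Fin n, 1/2 * δ^((i:ℕ)+1) ≤ lam i ∧ lam i ≤ 2*δ^((i:ℕ)+1)) (i : Fin n) :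
    0 < lam i :=
  lt_of_lt_of_le (by positivity) (hl i).1

lemma lam_le {n : ℕ} {δ : ℝ} (hδ0 : 0 < δ) (hδ1 : δ ≤ 1) {lam : Fin n → ℝ}
    (hl : ∀ i : Fin n, 1/2 * δ^((i:ℕ)+1) ≤ lam i ∧ lam i ≤ 2*δ^((i:ℕ)+1)) (i : Fin n) :
    lam i ≤ 2*δ := by
  have e1 := (hl i).2
  have e2 : δ^((i:ℕ)+1) ≤ δ^1 := pow_le_pow_of_le_one hδ0.le hδ1 (by omega)
  rw [pow_one] at e2
  linarith

lemma lam_ratio {n : ℕ} {δ : ℝ} (hδ0 : 0 < δ) (hδ1 : δ ≤ 1) {lam : Fin n → ℝ}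
    (hl : ∀ i : Fin n, 1/2 * δ^((i:ℕ)+1) ≤ lam i ∧ lam i ≤ 2*δ^((i:ℕ)+1))
    {s t : Fin n} (hst : s < t) : lam t ≤ 4*δ*(lam s) := by
  have e1 := (hl t).2
  have e2 := (hl s).1
  have hst' : (s:ℕ) < (t:ℕ) := hst
  have e3 : δ^((t:ℕ)+1) ≤ δ^((s:ℕ)+1+1) := pow_le_pow_of_le_one hδ0.le hδ1 (by omega)
  have e4 : δ^((s:ℕ)+1+1) = δ * δ^((s:ℕ)+1) := by ring
  nlinarith [pow_nonneg hδ0.le ((s:ℕ)+1), pow_nonneg hδ0.le ((t:ℕ)+1)]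

lemma aux_inv_boundA {δ l : ℝ} (h4 : l^2 ≤ 16*δ^2) :
    1 - 16*δ^2 ≤ (1 + l^2)⁻¹ := by
  have h1 : (0:ℝ) < 1 + l^2 := by positivity
  have h2 : (1-16*δ^2) * (1+l^2) ≤ 1 := by nlinarith [sq_nonneg l, sq_nonneg δ]
  calc 1 - 16*δ^2 = ((1-16*δ^2)*(1+l^2))/(1+l^2) := by field_simp
    _ ≤ 1/(1+l^2) := by gcongr
    _ = (1+l^2)⁻¹ := one_div _

lemma aux_inv_boundB {δ ls lt : ℝ} (h1 : 0 < ls) (h4 : lt^2 ≤ 16*δ^2*ls^2) :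
    1 - 16*δ^2 ≤ (ls^2 + lt^2)⁻¹ * ls^2 := by
  have h0 : (0:ℝ) < ls^2 + lt^2 := by positivity
  have h2 : (1-16*δ^2)*(ls^2+lt^2) ≤ ls^2 := by nlinarith [sq_nonneg lt, sq_nonneg δ, sq_nonneg ls]
  calc 1 - 16*δ^2 = ((1-16*δ^2)*(ls^2+lt^2))/(ls^2+lt^2) := by field_simp
    _ ≤ ls^2/(ls^2+lt^2) := by gcongr -- (div_le_div_right h0).mpr h2
    _ = (ls^2+lt^2)⁻¹ * ls^2 := by rw [div_eq_inv_mul]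

lemma aux_offB {δ ls lt : ℝ} (hs : 0 < ls) (ht : 0 ≤ lt) (hδ : 0 ≤ δ) (hlt : lt ≤ 4*δ*ls) :
    (ls^2+lt^2)⁻¹ * (ls*lt) ≤ 4*δ := by
  have hX : (0:ℝ) < ls^2+lt^2 := by positivity
  have h2 : ls*lt ≤ 4*δ*(ls^2+lt^2) := by nlinarith
  calc (ls^2+lt^2)⁻¹*(ls*lt) ≤ (ls^2+lt^2)⁻¹*(4*δ*(ls^2+lt^2)) :=
        mul_le_mul_of_nonneg_left h2 (inv_nonneg.mpr hX.le)
    _ = 4*δ := by field_simp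

end Aux2
section Aux3

open Finset

lemma projOnto_phiA_diag_re {n : ℕ} (l : ℝ) (s : Fin n) :
    (projOnto (phiA l s) ((0 : Fin (n+1)), s.succ) ((0 : Fin (n+1)), s.succ)).re
      = (1 + l^2)⁻¹ := by
  rw [projOnto_diag, Complex.ofReal_re, sum_normSq_phiA]
  rw [phiA_apply, if_pos rfl]
  simp

lemma projOnto_phiB_diag_re {n : ℕ} (ls lt : ℝ) {s t : Fin n} (hst : s ≠ t) :
    (projOnto (phiB ls lt s t) ((s.succ : Fin (n+1)), t.succ) ((s.succ : Fin (n+1)), t.succ)).re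
      = (ls^2 + lt^2)⁻¹ * ls^2 := by
  rw [projOnto_diag, Complex.ofReal_re, sum_normSq_phiB ls lt hst]
  rw [phiB_apply ls lt hst, if_pos rfl]
  simp [Complex.normSq_ofReal, sq]

lemma projOnto_phiC_diag_re {n : ℕ} (s : Fin n) :
    (projOnto (phiC s) ((s.succ : Fin (n+1)), s.succ) ((s.succ : Fin (n+1)), s.succ)).re = 1 := by
  rw [projOnto_diag, Complex.ofReal_re, sum_normSq_phiC]
  rw [phiC_apply, if_pos rfl]
  simp

lemma hloc_diag_good {n : ℕ} {δ : ℝ} (hδ0 : 0 < δ) (hδ1 : δ ≤ 1) {lam : Fin n → ℝ}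
    (hl : ∀ i : Fin n, 1/2 * δ^((i:ℕ)+1) ≤ lam i ∧ lam i ≤ 2*δ^((i:ℕ)+1))
    {a b : Fin (n+1)} (hg : a < b ∨ (a = b ∧ a ≠ 0)) :
    1 - 16*δ^2 ≤ (hloc lam (a,b) (a,b)).re := by
  have hnn2 : 0 ≤ ∑ i : Fin n, ∑ j : Fin n,
      ((if i < j then projOnto (phiB (lam i) (lam j) i j) (a,b) (a,b)
        else if i = j then projOnto (phiC i) (a,b) (a,b) else 0)).re := by
    refine Finset.sum_nonneg fun i _ => Finset.sum_nonneg fun j _ => ?_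
    split_ifs
    · exact projOnto_diag_re_nonneg _ _
    · exact projOnto_diag_re_nonneg _ _
    · simp
  have hnn1 : 0 ≤ ∑ i : Fin n, (projOnto (phiA (lam i) i) (a,b) (a,b)).re :=
    Finset.sum_nonneg fun i _ => projOnto_diag_re_nonneg _ _
  have hre : (hloc lam (a,b) (a,b)).re
      = (∑ i : Fin n, (projOnto (phiA (lam i) i) (a,b) (a,b)).re)
        + ∑ i : Fin n, ∑ j : Fin n,
          ((if i < j then projOnto (phiB (lam i) (lam j) i j) (a,b) (a,b)
            else if i = j then projOnto (phiC i) (a,b) (a,b) else 0)).re := by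
    rw [hloc_apply]
    simp [Complex.add_re, Complex.re_sum]
  rcases hg with hlt | ⟨rfl, ha⟩
  · have hb0 : b ≠ 0 := by
      intro h
      subst h
      exact Fin.not_lt_zero a hlt
    obtain ⟨t, rfl⟩ := Fin.exists_succ_eq.mpr hb0
    rcases eq_or_ne a 0 with rfl | ha0
    · -- pair (0, t.succ) : use phiA t
      have key : (projOnto (phiA (lam t) t) ((0 : Fin (n+1)), t.succ)
          ((0 : Fin (n+1)), t.succ)).re = (1 + (lam t)^2)⁻¹ := projOnto_phiA_diag_re _ _
      have h1 : (1 + (lam t)^2)⁻¹ ≤ ∑ i : Fin n, (projOnto (phiA (lam i) i)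
          ((0 : Fin (n+1)), t.succ) ((0 : Fin (n+1)), t.succ)).re := by
        rw [← key]
        exact Finset.single_le_sum (f := fun i => (projOnto (phiA (lam i) i)
          ((0 : Fin (n+1)), t.succ) ((0 : Fin (n+1)), t.succ)).re)
          (fun i _ => projOnto_diag_re_nonneg _ _) (Finset.mem_univ t)
      have h2 : 1 - 16*δ^2 ≤ (1 + (lam t)^2)⁻¹ := by
        apply aux_inv_boundA
        have e1 : lam t ≤ 2*δ := lam_le hδ0 hδ1 hl t
        have e2 : 0 < lam t := lam_pos hδ0 hl t
        nlinarith
      rw [hre]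
      linarith
    · obtain ⟨s, rfl⟩ := Fin.exists_succ_eq.mpr ha0
      have hst : s < t := by
        rwa [Fin.succ_lt_succ_iff] at hlt
      have key : (projOnto (phiB (lam s) (lam t) s t) ((s.succ : Fin (n+1)), t.succ)
          ((s.succ : Fin (n+1)), t.succ)).re = ((lam s)^2 + (lam t)^2)⁻¹ * (lam s)^2 :=
        projOnto_phiB_diag_re _ _ (ne_of_lt hst)
      have h1 : ((lam s)^2 + (lam t)^2)⁻¹ * (lam s)^2 ≤ ∑ i : Fin n, ∑ j : Fin n,
          ((if i < j then projOnto (phiB (lam i) (lam j) i j) (s.succ, t.succ) (s.succ, t.succ)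
            else if i = j then projOnto (phiC i) (s.succ, t.succ) (s.succ, t.succ) else 0)).re := by
        rw [← key]
        calc (projOnto (phiB (lam s) (lam t) s t) ((s.succ : Fin (n+1)), t.succ)
              ((s.succ : Fin (n+1)), t.succ)).re
            = ((if s < t then projOnto (phiB (lam s) (lam t) s t) (s.succ, t.succ) (s.succ, t.succ)
              else if s = t then projOnto (phiC s) (s.succ, t.succ) (s.succ, t.succ) else 0)).re := by
              rw [if_pos hst]
          _ ≤ ∑ j : Fin n, ((if s < j then projOnto (phiB (lam s) (lam j) s j) (s.succ, t.succ) (s.succ, t.succ)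
              else if s = j then projOnto (phiC s) (s.succ, t.succ) (s.succ, t.succ) else 0)).re := by
              refine Finset.single_le_sum (f := fun j => ((if s < j then projOnto (phiB (lam s) (lam j) s j) (s.succ, t.succ) (s.succ, t.succ)
                else if s = j then projOnto (phiC s) (s.succ, t.succ) (s.succ, t.succ) else 0)).re)
                (fun j _ => ?_) (Finset.mem_univ t)
              split_ifs
              · exact projOnto_diag_re_nonneg _ _
              · exact projOnto_diag_re_nonneg _ _
              · simp
          _ ≤ _ := by
              refine Finset.single_le_sum (f := fun i => ∑ j : Fin n,
                ((if i < j then projOnto (phiB (lam i) (lam j) i j) (s.succ, t.succ) (s.succ, t.succ)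
                  else if i = j then projOnto (phiC i) (s.succ, t.succ) (s.succ, t.succ) else 0)).re)
                (fun i _ => Finset.sum_nonneg fun j _ => ?_) (Finset.mem_univ s)
              split_ifs
              · exact projOnto_diag_re_nonneg _ _
              · exact projOnto_diag_re_nonneg _ _
              · simp
      have h2 : 1 - 16*δ^2 ≤ ((lam s)^2 + (lam t)^2)⁻¹ * (lam s)^2 := by
        apply aux_inv_boundB (lam_pos hδ0 hl s)
        have e1 : lam t ≤ 4*δ*(lam s) := lam_ratio hδ0 hδ1 hl hst
        have e2 : 0 < lam t := lam_pos hδ0 hl t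
        have e3 : 0 < lam s := lam_pos hδ0 hl s
        nlinarith
      rw [hre]
      linarith
  · -- diagonal pair (a, a), a ≠ 0
    obtain ⟨s, rfl⟩ := Fin.exists_succ_eq.mpr ha
    have key : (projOnto (phiC s) ((s.succ : Fin (n+1)), s.succ)
        ((s.succ : Fin (n+1)), s.succ)).re = 1 := projOnto_phiC_diag_re _
    have h1 : (1:ℝ) ≤ ∑ i : Fin n, ∑ j : Fin n,
        ((if i < j then projOnto (phiB (lam i) (lam j) i j) (s.succ, s.succ) (s.succ, s.succ)
          else if i = j then projOnto (phiC i) (s.succ, s.succ) (s.succ, s.succ) else 0)).re := by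
      rw [← key]
      calc (projOnto (phiC s) ((s.succ : Fin (n+1)), s.succ) ((s.succ : Fin (n+1)), s.succ)).re
          = ((if s < s then projOnto (phiB (lam s) (lam s) s s) (s.succ, s.succ) (s.succ, s.succ)
            else if s = s then projOnto (phiC s) (s.succ, s.succ) (s.succ, s.succ) else 0)).re := by
            rw [if_neg (lt_irrefl s), if_pos rfl]
        _ ≤ ∑ j : Fin n, ((if s < j then projOnto (phiB (lam s) (lam j) s j) (s.succ, s.succ) (s.succ, s.succ)
            else if s = j then projOnto (phiC s) (s.succ, s.succ) (s.succ, s.succ) else 0)).re := by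
            refine Finset.single_le_sum (f := fun j => ((if s < j then projOnto (phiB (lam s) (lam j) s j) (s.succ, s.succ) (s.succ, s.succ)
              else if s = j then projOnto (phiC s) (s.succ, s.succ) (s.succ, s.succ) else 0)).re)
              (fun j _ => ?_) (Finset.mem_univ s)
            split_ifs
            · exact projOnto_diag_re_nonneg _ _
            · exact projOnto_diag_re_nonneg _ _
            · simp
        _ ≤ _ := by
            refine Finset.single_le_sum (f := fun i => ∑ j : Fin n,
              ((if i < j then projOnto (phiB (lam i) (lam j) i j) (s.succ, s.succ) (s.succ, s.succ)
                else if i = j then projOnto (phiC i) (s.succ, s.succ) (s.succ, s.succ) else 0)).re)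
              (fun i _ => Finset.sum_nonneg fun j _ => ?_) (Finset.mem_univ s)
            split_ifs
            · exact projOnto_diag_re_nonneg _ _
            · exact projOnto_diag_re_nonneg _ _
            · simp
    rw [hre]
    nlinarith [sq_nonneg δ]

end Aux3
section Aux4

open Finset

lemma aux_offA {δ l : ℝ} (h0 : 0 ≤ l) (hld : l ≤ 2*δ) : (1+l^2)⁻¹ * l ≤ 4*δ := by
  have h1 : (0:ℝ) < 1+l^2 := by positivity
  have h3 : (1+l^2)⁻¹*(1+l^2) = 1 := inv_mul_cancel₀ h1.ne'
  have h4 : (0:ℝ) ≤ (1+l^2)⁻¹ := inv_nonneg.mpr h1.le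
  have h5 : (1+l^2)⁻¹ ≤ 1 := by nlinarith [mul_nonneg h4 (sq_nonneg l)]
  nlinarith [mul_le_mul_of_nonneg_right h5 h0]

lemma norm_coe_real (x : ℝ) : ‖((x:ℝ):ℂ)‖ = |x| := by
  rw [Complex.norm_real, Real.norm_eq_abs]

lemma hloc_offnorm {n : ℕ} {δ : ℝ} (hδ0 : 0 < δ) (hδ1 : δ ≤ 1) {lam : Fin n → ℝ}
    (hl : ∀ i : Fin n, 1/2 * δ^((i:ℕ)+1) ≤ lam i ∧ lam i ≤ 2*δ^((i:ℕ)+1))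
    (a b : Fin (n+1)) (hab : a ≠ b) : ‖hloc lam (a,b) (b,a)‖ ≤ 4*δ := by
  rcases eq_or_ne a 0 with rfl | ha0
  · -- a = 0, b = t.succ
    obtain ⟨t, rfl⟩ := Fin.exists_succ_eq.mpr (Ne.symm hab)
    have hS1 : (∑ i : Fin n, projOnto (phiA (lam i) i) ((0 : Fin (n+1)), t.succ) (t.succ, 0))
        = projOnto (phiA (lam t) t) ((0 : Fin (n+1)), t.succ) (t.succ, 0) := by
      refine Finset.sum_eq_single_of_mem t (Finset.mem_univ t) fun i _ hi => ?_
      have hi' : (i:ℕ) ≠ (t:ℕ) := fun hc => hi (Fin.ext hc)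
      apply projOnto_zero_left
      rw [phiA_apply, if_neg, if_neg] <;>
        · intro h
          have h1 := congrArg (fun z : Fin (n+1) × Fin (n+1) => (z.1 : ℕ)) h
          have h2 := congrArg (fun z : Fin (n+1) × Fin (n+1) => (z.2 : ℕ)) h
          simp only [Fin.val_succ, Fin.val_zero] at h1 h2
          omega
    have hS2 : (∑ i : Fin n, ∑ j : Fin n,
        (if i < j then projOnto (phiB (lam i) (lam j) i j) ((0 : Fin (n+1)), t.succ) (t.succ, 0)
          else if i = j then projOnto (phiC i) ((0 : Fin (n+1)), t.succ) (t.succ, 0) else 0)) = 0 := by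
      refine Finset.sum_eq_zero fun i _ => Finset.sum_eq_zero fun j _ => ?_
      split_ifs with h1 h2
      · apply projOnto_zero_left
        rw [phiB_apply _ _ (ne_of_lt h1), if_neg, if_neg] <;>
          · intro h
            have ha := congrArg (fun z : Fin (n+1) × Fin (n+1) => (z.1 : ℕ)) h
            have hb := congrArg (fun z : Fin (n+1) × Fin (n+1) => (z.2 : ℕ)) h
            simp only [Fin.val_succ, Fin.val_zero] at ha hb
            omega
      · apply projOnto_zero_left
        rw [phiC_apply, if_neg]
        intro h
        have ha := congrArg (fun z : Fin (n+1) × Fin (n+1) => (z.1 : ℕ)) h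
        simp only [Fin.val_succ, Fin.val_zero] at ha
        omega
      · rfl
    rw [hloc_apply, hS1, hS2, add_zero]
    have hb := projOnto_norm_le (phiA (lam t) t) ((0 : Fin (n+1)), t.succ) (t.succ, 0)
    rw [sum_normSq_phiA] at hb
    rw [show phiA (lam t) t ((0 : Fin (n+1)), t.succ) = 1 by rw [phiA_apply, if_pos rfl]] at hb
    rw [show phiA (lam t) t ((t.succ : Fin (n+1)), 0) = -((lam t : ℝ):ℂ) by
      rw [phiA_apply, if_neg (Ne.symm (pairAB_ne t)), if_pos rfl]] at hb
    rw [norm_one, norm_neg, norm_coe_real, abs_of_pos (lam_pos hδ0 hl t), one_mul] at hb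
    exact le_trans hb (aux_offA (lam_pos hδ0 hl t).le (lam_le hδ0 hδ1 hl t))
  · obtain ⟨s, rfl⟩ := Fin.exists_succ_eq.mpr ha0
    rcases eq_or_ne b 0 with rfl | hb0
    · -- a = s.succ, b = 0
      have hS1 : (∑ i : Fin n, projOnto (phiA (lam i) i) ((s.succ : Fin (n+1)), 0) (0, s.succ))
          = projOnto (phiA (lam s) s) ((s.succ : Fin (n+1)), 0) (0, s.succ) := by
        refine Finset.sum_eq_single_of_mem s (Finset.mem_univ s) fun i _ hi => ?_
        have hi' : (i:ℕ) ≠ (s:ℕ) := fun hc => hi (Fin.ext hc)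
        apply projOnto_zero_left
        rw [phiA_apply, if_neg, if_neg] <;>
          · intro h
            have h1 := congrArg (fun z : Fin (n+1) × Fin (n+1) => (z.1 : ℕ)) h
            have h2 := congrArg (fun z : Fin (n+1) × Fin (n+1) => (z.2 : ℕ)) h
            simp only [Fin.val_succ, Fin.val_zero] at h1 h2
            omega
      have hS2 : (∑ i : Fin n, ∑ j : Fin n,
          (if i < j then projOnto (phiB (lam i) (lam j) i j) ((s.succ : Fin (n+1)), 0) (0, s.succ)
            else if i = j then projOnto (phiC i) ((s.succ : Fin (n+1)), 0) (0, s.succ) else 0)) = 0 := by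
        refine Finset.sum_eq_zero fun i _ => Finset.sum_eq_zero fun j _ => ?_
        split_ifs with h1 h2
        · apply projOnto_zero_left
          rw [phiB_apply _ _ (ne_of_lt h1), if_neg, if_neg] <;>
            · intro h
              have ha := congrArg (fun z : Fin (n+1) × Fin (n+1) => (z.1 : ℕ)) h
              have hb := congrArg (fun z : Fin (n+1) × Fin (n+1) => (z.2 : ℕ)) h
              simp only [Fin.val_succ, Fin.val_zero] at ha hb
              omega
        · apply projOnto_zero_left
          rw [phiC_apply, if_neg]
          intro h
          have ha := congrArg (fun z : Fin (n+1) × Fin (n+1) => (z.2 : ℕ)) h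
          simp only [Fin.val_succ, Fin.val_zero] at ha
          omega
        · rfl
      rw [hloc_apply, hS1, hS2, add_zero]
      have hb := projOnto_norm_le (phiA (lam s) s) ((s.succ : Fin (n+1)), 0) (0, s.succ)
      rw [sum_normSq_phiA] at hb
      rw [show phiA (lam s) s ((s.succ : Fin (n+1)), 0) = -((lam s : ℝ):ℂ) by
        rw [phiA_apply, if_neg (Ne.symm (pairAB_ne s)), if_pos rfl]] at hb
      rw [show phiA (lam s) s ((0 : Fin (n+1)), s.succ) = 1 by rw [phiA_apply, if_pos rfl]] at hb
      rw [norm_one, norm_neg, norm_coe_real, abs_of_pos (lam_pos hδ0 hl s), mul_one] at hb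
      exact le_trans hb (aux_offA (lam_pos hδ0 hl s).le (lam_le hδ0 hδ1 hl s))
    · -- a = s.succ, b = t.succ, s ≠ t
      obtain ⟨t, rfl⟩ := Fin.exists_succ_eq.mpr hb0
      have hst' : s ≠ t := fun h => hab (congrArg Fin.succ h)
      have hstv : (s:ℕ) ≠ (t:ℕ) := fun hc => hst' (Fin.ext hc)
      have hS1 : (∑ i : Fin n, projOnto (phiA (lam i) i)
          ((s.succ : Fin (n+1)), t.succ) (t.succ, s.succ)) = 0 := by
        refine Finset.sum_eq_zero fun i _ => ?_
        apply projOnto_zero_left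
        rw [phiA_apply, if_neg, if_neg] <;>
          · intro h
            have h1 := congrArg (fun z : Fin (n+1) × Fin (n+1) => (z.1 : ℕ)) h
            have h2 := congrArg (fun z : Fin (n+1) × Fin (n+1) => (z.2 : ℕ)) h
            simp only [Fin.val_succ, Fin.val_zero] at h1 h2
            omega
      rw [hloc_apply, hS1, zero_add]
      rcases lt_or_gt_of_ne hst' with hlt | hgt
      · have hltv : (s:ℕ) < (t:ℕ) := hlt
        have hS2 : (∑ i : Fin n, ∑ j : Fin n,
            (if i < j then projOnto (phiB (lam i) (lam j) i j) ((s.succ : Fin (n+1)), t.succ) (t.succ, s.succ)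
              else if i = j then projOnto (phiC i) ((s.succ : Fin (n+1)), t.succ) (t.succ, s.succ) else 0))
            = projOnto (phiB (lam s) (lam t) s t) ((s.succ : Fin (n+1)), t.succ) (t.succ, s.succ) := by
          rw [double_sum_eq _ s t, if_pos hlt]
          intro i j hij
          have hij' : ¬((i:ℕ) = (s:ℕ) ∧ (j:ℕ) = (t:ℕ)) :=
            fun hc => hij ⟨Fin.ext hc.1, Fin.ext hc.2⟩
          split_ifs with h1 h2
          · have h1v : (i:ℕ) < (j:ℕ) := h1
            apply projOnto_zero_left
            rw [phiB_apply _ _ (ne_of_lt h1), if_neg, if_neg] <;>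
              · intro h
                have ha := congrArg (fun z : Fin (n+1) × Fin (n+1) => (z.1 : ℕ)) h
                have hb := congrArg (fun z : Fin (n+1) × Fin (n+1) => (z.2 : ℕ)) h
                simp only [Fin.val_succ, Fin.val_zero] at ha hb
                omega
          · apply projOnto_zero_left
            rw [phiC_apply, if_neg]
            intro h
            have ha := congrArg (fun z : Fin (n+1) × Fin (n+1) => (z.1 : ℕ)) h
            have hb := congrArg (fun z : Fin (n+1) × Fin (n+1) => (z.2 : ℕ)) h
            simp only [Fin.val_succ, Fin.val_zero] at ha hb
            omega
          · rfl
        rw [hS2]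
        have hb := projOnto_norm_le (phiB (lam s) (lam t) s t)
          ((s.succ : Fin (n+1)), t.succ) (t.succ, s.succ)
        rw [sum_normSq_phiB _ _ hst'] at hb
        rw [show phiB (lam s) (lam t) s t ((s.succ : Fin (n+1)), t.succ) = ((lam s : ℝ):ℂ) by
          rw [phiB_apply _ _ hst', if_pos rfl]] at hb
        rw [show phiB (lam s) (lam t) s t ((t.succ : Fin (n+1)), s.succ) = -((lam t : ℝ):ℂ) by
          rw [phiB_apply _ _ hst', if_neg (Ne.symm (pairBB_ne hst')), if_pos rfl]] at hb
        rw [norm_neg, norm_coe_real, norm_coe_real, abs_of_pos (lam_pos hδ0 hl s),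
          abs_of_pos (lam_pos hδ0 hl t)] at hb
        exact le_trans hb (aux_offB (lam_pos hδ0 hl s) (lam_pos hδ0 hl t).le hδ0.le
          (lam_ratio hδ0 hδ1 hl hlt))
      · have hgtv : (t:ℕ) < (s:ℕ) := hgt
        have hS2 : (∑ i : Fin n, ∑ j : Fin n,
            (if i < j then projOnto (phiB (lam i) (lam j) i j) ((s.succ : Fin (n+1)), t.succ) (t.succ, s.succ)
              else if i = j then projOnto (phiC i) ((s.succ : Fin (n+1)), t.succ) (t.succ, s.succ) else 0))
            = projOnto (phiB (lam t) (lam s) t s) ((s.succ : Fin (n+1)), t.succ) (t.succ, s.succ) := by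
          rw [double_sum_eq _ t s, if_pos hgt]
          intro i j hij
          have hij' : ¬((i:ℕ) = (t:ℕ) ∧ (j:ℕ) = (s:ℕ)) :=
            fun hc => hij ⟨Fin.ext hc.1, Fin.ext hc.2⟩
          split_ifs with h1 h2
          · have h1v : (i:ℕ) < (j:ℕ) := h1
            apply projOnto_zero_left
            rw [phiB_apply _ _ (ne_of_lt h1), if_neg, if_neg] <;>
              · intro h
                have ha := congrArg (fun z : Fin (n+1) × Fin (n+1) => (z.1 : ℕ)) h
                have hb := congrArg (fun z : Fin (n+1) × Fin (n+1) => (z.2 : ℕ)) h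
                simp only [Fin.val_succ, Fin.val_zero] at ha hb
                omega
          · apply projOnto_zero_left
            rw [phiC_apply, if_neg]
            intro h
            have ha := congrArg (fun z : Fin (n+1) × Fin (n+1) => (z.1 : ℕ)) h
            have hb := congrArg (fun z : Fin (n+1) × Fin (n+1) => (z.2 : ℕ)) h
            simp only [Fin.val_succ, Fin.val_zero] at ha hb
            omega
          · rfl
        rw [hS2]
        have hb := projOnto_norm_le (phiB (lam t) (lam s) t s)
          ((s.succ : Fin (n+1)), t.succ) (t.succ, s.succ)
        rw [sum_normSq_phiB _ _ (Ne.symm hst')] at hb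
        rw [show phiB (lam t) (lam s) t s ((s.succ : Fin (n+1)), t.succ) = -((lam s : ℝ):ℂ) by
          rw [phiB_apply _ _ (Ne.symm hst'), if_neg (Ne.symm (pairBB_ne (Ne.symm hst'))), if_pos rfl]] at hb
        rw [show phiB (lam t) (lam s) t s ((t.succ : Fin (n+1)), s.succ) = ((lam t : ℝ):ℂ) by
          rw [phiB_apply _ _ (Ne.symm hst'), if_pos rfl]] at hb
        rw [norm_neg, norm_coe_real, norm_coe_real, abs_of_pos (lam_pos hδ0 hl s),
          abs_of_pos (lam_pos hδ0 hl t), mul_comm (lam s) (lam t)] at hb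
        exact le_trans hb (aux_offB (lam_pos hδ0 hl t) (lam_pos hδ0 hl s).le hδ0.le
          (lam_ratio hδ0 hδ1 hl hgt))

lemma hloc_row_sum {n : ℕ} {δ : ℝ} (hδ0 : 0 < δ) (hδ1 : δ ≤ 1) {lam : Fin n → ℝ}
    (hl : ∀ i : Fin n, 1/2 * δ^((i:ℕ)+1) ≤ lam i ∧ lam i ≤ 2*δ^((i:ℕ)+1))
    (p : Fin (n+1) × Fin (n+1)) :
    ∑ q ∈ Finset.univ.erase p, ‖hloc lam p q‖ ≤ 4*δ*(if p.1 = p.2 then 0 else 1) := by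
  rcases eq_or_ne p.1 p.2 with he | he
  · rw [if_pos he, mul_zero]
    rw [Finset.sum_eq_zero]
    intro q hq
    have hq1 : q ≠ p := (Finset.mem_erase.mp hq).1
    have hq2 : q ≠ (p.2, p.1) := by
      intro h
      apply hq1
      rw [h]
      exact Prod.ext he.symm he
    rw [hloc_off lam p q hq1 hq2, norm_zero]
  · rw [if_neg he, mul_one]
    have hswap : (p.2, p.1) ∈ Finset.univ.erase p := by
      rw [Finset.mem_erase]
      exact ⟨fun h => he (congrArg Prod.snd h), Finset.mem_univ _⟩
    rw [Finset.sum_eq_single_of_mem (p.2, p.1) hswap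
      (fun q hq hq2 => by
        rw [hloc_off lam p q (Finset.mem_erase.mp hq).1 hq2, norm_zero])]
    exact hloc_offnorm hδ0 hδ1 hl p.1 p.2 he

end Aux4
section Aux5

open Finset

lemma embed_diag {n : ℕ} {V : Type*} [Fintype V] [DecidableEq V] (x y : V)
    (h2 : Matrix (Fin (n + 1) × Fin (n + 1)) (Fin (n + 1) × Fin (n + 1)) ℂ)
    (σ : V → Fin (n + 1)) :
    embed x y h2 σ σ = h2 (σ x, σ y) (σ x, σ y) := by
  unfold embed
  rw [Matrix.of_apply, if_pos]
  intro z _ _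
  rfl

lemma embed_isHermitian {n : ℕ} {V : Type*} [Fintype V] [DecidableEq V] (x y : V)
    {h2 : Matrix (Fin (n + 1) × Fin (n + 1)) (Fin (n + 1) × Fin (n + 1)) ℂ}
    (hh : h2.IsHermitian) : (embed x y h2).IsHermitian := by
  apply Matrix.IsHermitian.ext
  intro σ τ
  unfold embed
  rw [Matrix.of_apply, Matrix.of_apply]
  by_cases hc : ∀ z, z ≠ x → z ≠ y → τ z = σ z
  · rw [if_pos hc, if_pos (fun z hzx hzy => (hc z hzx hzy).symm)]
    exact hh.apply _ _
  · rw [if_neg hc, if_neg, star_zero]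
    intro hc'
    exact hc (fun z hzx hzy => (hc' z hzx hzy).symm)

lemma embed_row_sum {n : ℕ} {V : Type*} [Fintype V] [DecidableEq V] {x y : V} (hxy : x ≠ y)
    (h2 : Matrix (Fin (n + 1) × Fin (n + 1)) (Fin (n + 1) × Fin (n + 1)) ℂ)
    (σ : V → Fin (n + 1)) :
    ∑ τ ∈ Finset.univ.erase σ, ‖embed x y h2 σ τ‖
      = ∑ q ∈ Finset.univ.erase (σ x, σ y), ‖h2 (σ x, σ y) q‖ := by
  set F : Fin (n+1) × Fin (n+1) → (V → Fin (n+1)) :=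
    fun q => Function.update (Function.update σ x q.1) y q.2 with hF
  have Fx : ∀ q, F q x = q.1 := by
    intro q
    rw [hF]
    simp only
    rw [Function.update_of_ne hxy, Function.update_self]
  have Fy : ∀ q, F q y = q.2 := by
    intro q
    rw [hF]
    simp only
    rw [Function.update_self]
  have Fz : ∀ q z, z ≠ x → z ≠ y → F q z = σ z := by
    intro q z hzx hzy
    rw [hF]
    simp only
    rw [Function.update_of_ne hzy, Function.update_of_ne hzx]
  have Fσ : F (σ x, σ y) = σ := by
    funext z
    by_cases hzy : z = y
    · subst hzy; rw [Fy]
    · by_cases hzx : z = x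
      · subst hzx; rw [Fx]
      · rw [Fz _ z hzx hzy]
  have Finj : ∀ q q', F q = F q' → q = q' := by
    intro q q' h
    have h1 : q.1 = q'.1 := by rw [← Fx q, ← Fx q', h]
    have h2' : q.2 = q'.2 := by rw [← Fy q, ← Fy q', h]
    exact Prod.ext h1 h2'
  have hFq : ∀ q, embed x y h2 σ (F q) = h2 (σ x, σ y) q := by
    intro q
    unfold embed
    rw [Matrix.of_apply, if_pos]
    · rw [Fx, Fy]
    · intro z hzx hzy
      exact (Fz q z hzx hzy).symm
  have himg : (Finset.univ.erase (σ x, σ y)).image F ⊆ Finset.univ.erase σ := by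
    intro τ hτ
    rw [Finset.mem_image] at hτ
    obtain ⟨q, hq, rfl⟩ := hτ
    rw [Finset.mem_erase] at hq ⊢
    refine ⟨fun hc => hq.1 ?_, Finset.mem_univ _⟩
    exact Prod.ext (by rw [← Fx q, hc]) (by rw [← Fy q, hc])
  have hzero : ∀ τ ∈ Finset.univ.erase σ,
      τ ∉ (Finset.univ.erase (σ x, σ y)).image F → ‖embed x y h2 σ τ‖ = 0 := by
    intro τ hτ hτim
    unfold embed
    rw [Matrix.of_apply]
    by_cases hc : ∀ z, z ≠ x → z ≠ y → σ z = τ z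
    · exfalso
      have hτF : τ = F (τ x, τ y) := by
        funext z
        by_cases hzy : z = y
        · subst hzy; rw [Fy]
        · by_cases hzx : z = x
          · subst hzx; rw [Fx]
          · rw [Fz _ z hzx hzy, ← hc z hzx hzy]
      apply hτim
      rw [Finset.mem_image]
      refine ⟨(τ x, τ y), ?_, hτF.symm⟩
      rw [Finset.mem_erase]
      refine ⟨fun hc' => ?_, Finset.mem_univ _⟩
      have : τ = σ := by rw [hτF, hc', Fσ]
      exact (Finset.mem_erase.mp hτ).1 this
    · rw [if_neg hc, norm_zero]
  calc ∑ τ ∈ Finset.univ.erase σ, ‖embed x y h2 σ τ‖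
      = ∑ τ ∈ (Finset.univ.erase (σ x, σ y)).image F, ‖embed x y h2 σ τ‖ :=
        (Finset.sum_subset himg hzero).symm
    _ = ∑ q ∈ Finset.univ.erase (σ x, σ y), ‖embed x y h2 σ (F q)‖ :=
        Finset.sum_image (fun q _ q' _ h => Finj q q' h)
    _ = ∑ q ∈ Finset.univ.erase (σ x, σ y), ‖h2 (σ x, σ y) q‖ :=
        Finset.sum_congr rfl fun q _ => by rw [hFq]

lemma nbrT_eq_add {N : ℕ} (x : Fin 2 → ZMod N) (k : Fin 2) :
    nbrT x k = x + (fun j => if j = k then 1 else 0) := by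
  funext j
  unfold nbrT
  rw [Pi.add_apply]
  split_ifs <;> simp

lemma nbrT_ne {N : ℕ} (hN : 1 < N) (x : Fin 2 → ZMod N) (k : Fin 2) : nbrT x k ≠ x := by
  haveI : Fact (1 < N) := ⟨hN⟩
  intro h
  have h1 := congrFun h k
  unfold nbrT at h1
  rw [if_pos rfl] at h1
  have : (1 : ZMod N) = 0 := by
    have := congrArg (fun t => t - x k) h1
    simpa using this
  exact one_ne_zero this

lemma fin_count_ineq {n : ℕ} (a b : Fin (n+1)) :
    ((b : ℕ) : ℤ) - ((a : ℕ) : ℤ)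
      ≤ -(if a = 0 then 0 else 1) + ((n:ℤ)+1) * (if a < b ∨ (a = b ∧ a ≠ 0) then 1 else 0) := by
  have hbn := Fin.is_le b
  have han := Fin.is_le a
  by_cases hg : a < b ∨ (a = b ∧ a ≠ 0)
  · rw [if_pos hg]
    split_ifs with h0 <;> omega
  · rw [if_neg hg]
    push_neg at hg
    obtain ⟨hg1, hg2⟩ := hg
    have hg1' : (b:ℕ) ≤ (a:ℕ) := Fin.le_def.mp hg1
    by_cases h0 : a = 0
    · rw [if_pos h0]
      have ha0 : (a:ℕ) = 0 := by simp [h0]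
      omega
    · rw [if_neg h0]
      have hne : (a:ℕ) ≠ (b:ℕ) := fun hc => h0 (hg2 (Fin.ext hc))
      omega

lemma shift_sum_eq {N : ℕ} [NeZero N] (c : Fin 2 → ZMod N) (g : (Fin 2 → ZMod N) → ℤ) :
    ∑ x : Fin 2 → ZMod N, g (x + c) = ∑ x : Fin 2 → ZMod N, g x :=
  Fintype.sum_equiv (Equiv.addRight c) _ _ (fun _ => rfl)

lemma good_count {n N : ℕ} [NeZero N] (σ : (Fin 2 → ZMod N) → Fin (n+1)) :
    (∑ x : Fin 2 → ZMod N, (if σ x = 0 then (0:ℤ) else 1))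
      ≤ ((n:ℤ)+1) * ∑ x : Fin 2 → ZMod N,
          (if σ x < σ (nbrT x 0) ∨ (σ x = σ (nbrT x 0) ∧ σ x ≠ 0) then 1 else 0) := by
  have tele : ∑ x : Fin 2 → ZMod N, (((σ (nbrT x 0) : ℕ) : ℤ) - ((σ x : ℕ) : ℤ)) = 0 := by
    rw [Finset.sum_sub_distrib]
    have h1 : ∑ x : Fin 2 → ZMod N, ((σ (nbrT x 0) : ℕ) : ℤ)
        = ∑ x : Fin 2 → ZMod N, ((σ x : ℕ):ℤ) := by
      have h2 := shift_sum_eq (N := N) (fun j => if j = 0 then 1 else 0)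
        (fun x => ((σ x : ℕ):ℤ))
      rw [← h2]
      refine Finset.sum_congr rfl fun x _ => ?_
      rw [nbrT_eq_add]
    rw [h1, sub_self]
  have hsum := Finset.sum_le_sum (fun x (_ : x ∈ Finset.univ) => fin_count_ineq (σ x) (σ (nbrT x 0)))
  rw [tele] at hsum
  rw [Finset.sum_add_distrib, Finset.sum_neg_distrib, ← Finset.mul_sum] at hsum
  linarith

end Aux5
section Aux6

open Finset

lemma isHermitian_finset_sum {ι I : Type*} [Fintype I] (s : Finset ι) (f : ι → Matrix I I ℂ)
    (h : ∀ i ∈ s, (f i).IsHermitian) : (∑ i ∈ s, f i).IsHermitian := by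
  unfold Matrix.IsHermitian at *
  rw [Matrix.conjTranspose_sum]
  exact Finset.sum_congr rfl h

lemma hloc_isHermitian {n : ℕ} (lam : Fin n → ℝ) : (hloc lam).IsHermitian := by
  unfold hloc
  apply Matrix.IsHermitian.add
  · exact isHermitian_finset_sum _ _ fun i _ => projOnto_isHermitian _
  · refine isHermitian_finset_sum _ _ fun i _ => isHermitian_finset_sum _ _ fun j _ => ?_
    split_ifs
    · exact projOnto_isHermitian _
    · exact projOnto_isHermitian _
    · exact Matrix.isHermitian_zero

lemma HL_isHermitian {n N : ℕ} [NeZero N] (lam : Fin n → Fin 2 → ℝ) :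
    (HL n 2 N lam).IsHermitian := by
  unfold HL hedge
  exact isHermitian_finset_sum _ _ fun e _ =>
    embed_isHermitian _ _ (hloc_isHermitian _)

lemma HL_apply {n N : ℕ} [NeZero N] (lam : Fin n → Fin 2 → ℝ)
    (σ τ : (Fin 2 → ZMod N) → Fin (n+1)) :
    HL n 2 N lam σ τ = ∑ e : (Fin 2 → ZMod N) × Fin 2, hedge lam e σ τ := by
  unfold HL
  rw [Matrix.sum_apply]

lemma hedge_diag_re {n N : ℕ} [NeZero N] (lam : Fin n → Fin 2 → ℝ)
    (e : (Fin 2 → ZMod N) × Fin 2) (σ : (Fin 2 → ZMod N) → Fin (n+1)) :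
    (hedge lam e σ σ).re
      = (hloc (fun i => lam i e.2) (σ e.1, σ (nbrT e.1 e.2)) (σ e.1, σ (nbrT e.1 e.2))).re := by
  unfold hedge
  rw [embed_diag]

lemma HL_diag_re_nonneg {n N : ℕ} [NeZero N] (lam : Fin n → Fin 2 → ℝ)
    (σ : (Fin 2 → ZMod N) → Fin (n+1)) : 0 ≤ (HL n 2 N lam σ σ).re := by
  rw [HL_apply, Complex.re_sum]
  exact Finset.sum_nonneg fun e _ => by
    rw [hedge_diag_re]
    exact hloc_diag_re_nonneg _ _

lemma HL_diag_lower {n N : ℕ} [NeZero N] {δ : ℝ} (hδ0 : 0 < δ) (hδ1 : δ ≤ 1)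
    {lam : Fin n → Fin 2 → ℝ}
    (hl : ∀ (i : Fin n) (k : Fin 2), 1/2 * δ^((i:ℕ)+1) ≤ lam i k ∧ lam i k ≤ 2*δ^((i:ℕ)+1))
    (σ : (Fin 2 → ZMod N) → Fin (n+1)) :
    (1-16*δ^2) * (∑ x : Fin 2 → ZMod N,
        (if σ x < σ (nbrT x 0) ∨ (σ x = σ (nbrT x 0) ∧ σ x ≠ 0) then (1:ℝ) else 0))
      ≤ (HL n 2 N lam σ σ).re := by
  rw [HL_apply, Complex.re_sum, Fintype.sum_prod_type, Finset.mul_sum]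
  refine Finset.sum_le_sum fun x _ => ?_
  rw [Fin.sum_univ_two]
  have h1 : (hedge lam (x, 1) σ σ).re ≥ 0 := by
    rw [hedge_diag_re]
    exact hloc_diag_re_nonneg _ _
  have h0 : (1-16*δ^2) * (if σ x < σ (nbrT x 0) ∨ (σ x = σ (nbrT x 0) ∧ σ x ≠ 0) then (1:ℝ) else 0)
      ≤ (hedge lam (x, 0) σ σ).re := by
    rw [hedge_diag_re]
    split_ifs with hg
    · rw [mul_one]
      exact hloc_diag_good hδ0 hδ1 (fun i => hl i 0) hg
    · rw [mul_zero]
      exact hloc_diag_re_nonneg _ _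
  linarith

lemma HL_row_sum {n N : ℕ} [NeZero N] (hN : 1 < N) {δ : ℝ} (hδ0 : 0 < δ) (hδ1 : δ ≤ 1)
    {lam : Fin n → Fin 2 → ℝ}
    (hl : ∀ (i : Fin n) (k : Fin 2), 1/2 * δ^((i:ℕ)+1) ≤ lam i k ∧ lam i k ≤ 2*δ^((i:ℕ)+1))
    (σ : (Fin 2 → ZMod N) → Fin (n+1)) :
    ∑ τ ∈ Finset.univ.erase σ, ‖HL n 2 N lam σ τ‖
      ≤ 16*δ*(∑ x : Fin 2 → ZMod N, (if σ x = 0 then (0:ℝ) else 1)) := by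
  have step1 : ∑ τ ∈ Finset.univ.erase σ, ‖HL n 2 N lam σ τ‖
      ≤ ∑ e : (Fin 2 → ZMod N) × Fin 2, ∑ τ ∈ Finset.univ.erase σ, ‖hedge lam e σ τ‖ := by
    rw [Finset.sum_comm]
    refine Finset.sum_le_sum fun τ _ => ?_
    rw [HL_apply]
    exact norm_sum_le _ _
  have step2 : ∀ e : (Fin 2 → ZMod N) × Fin 2,
      ∑ τ ∈ Finset.univ.erase σ, ‖hedge lam e σ τ‖
        ≤ 4*δ*(if σ e.1 = σ (nbrT e.1 e.2) then (0:ℝ) else 1) := by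
    intro e
    unfold hedge
    rw [embed_row_sum (Ne.symm (nbrT_ne hN e.1 e.2))]
    exact hloc_row_sum hδ0 hδ1 (fun i => hl i e.2) _
  have step3 : ∀ e : (Fin 2 → ZMod N) × Fin 2,
      (if σ e.1 = σ (nbrT e.1 e.2) then (0:ℝ) else 1)
        ≤ (if σ e.1 = 0 then (0:ℝ) else 1) + (if σ (nbrT e.1 e.2) = 0 then (0:ℝ) else 1) := by
    intro e
    split_ifs with h1 h2 h3 <;> norm_num
    rename_i h2 h3
    exact h1 (by rw [h2, h3])
  have step4 : ∑ e : (Fin 2 → ZMod N) × Fin 2, (if σ e.1 = 0 then (0:ℝ) else 1)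
      = 2 * ∑ x : Fin 2 → ZMod N, (if σ x = 0 then (0:ℝ) else 1) := by
    rw [Fintype.sum_prod_type]
    rw [Finset.sum_congr rfl (fun x _ => Fin.sum_univ_two (fun _ => if σ x = 0 then (0:ℝ) else 1))]
    rw [Finset.mul_sum]
    exact Finset.sum_congr rfl fun x _ => by ring
  have step5 : ∑ e : (Fin 2 → ZMod N) × Fin 2, (if σ (nbrT e.1 e.2) = 0 then (0:ℝ) else 1)
      = 2 * ∑ x : Fin 2 → ZMod N, (if σ x = 0 then (0:ℝ) else 1) := by
    rw [Fintype.sum_prod_type_right]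
    have hk : ∀ k : Fin 2, ∑ x : Fin 2 → ZMod N, (if σ (nbrT x k) = 0 then (0:ℝ) else 1)
        = ∑ x : Fin 2 → ZMod N, (if σ x = 0 then (0:ℝ) else 1) := by
      intro k
      have h2 := Fintype.sum_equiv (Equiv.addRight (fun j => if j = k then (1 : ZMod N) else 0))
        (fun x => if σ (x + fun j => if j = k then (1:ZMod N) else 0) = 0 then (0:ℝ) else 1)
        (fun x => if σ x = 0 then (0:ℝ) else 1) (fun x => rfl)
      rw [← h2]
      exact Finset.sum_congr rfl fun x _ => by rw [nbrT_eq_add]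
    rw [Fin.sum_univ_two, hk 0, hk 1]
    ring
  calc ∑ τ ∈ Finset.univ.erase σ, ‖HL n 2 N lam σ τ‖
      ≤ ∑ e : (Fin 2 → ZMod N) × Fin 2, ∑ τ ∈ Finset.univ.erase σ, ‖hedge lam e σ τ‖ := step1
    _ ≤ ∑ e : (Fin 2 → ZMod N) × Fin 2,
          4*δ*(if σ e.1 = σ (nbrT e.1 e.2) then (0:ℝ) else 1) :=
        Finset.sum_le_sum fun e _ => step2 e
    _ ≤ ∑ e : (Fin 2 → ZMod N) × Fin 2,
          (4*δ*((if σ e.1 = 0 then (0:ℝ) else 1) + (if σ (nbrT e.1 e.2) = 0 then (0:ℝ) else 1))) := by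
        refine Finset.sum_le_sum fun e _ => ?_
        have := step3 e
        nlinarith [hδ0.le]
    _ = 16*δ*(∑ x : Fin 2 → ZMod N, (if σ x = 0 then (0:ℝ) else 1)) := by
        rw [← Finset.mul_sum, Finset.sum_add_distrib, step4, step5]
        ring

lemma HL_vac_row {n N : ℕ} [NeZero N] (lam : Fin n → Fin 2 → ℝ)
    {σ : (Fin 2 → ZMod N) → Fin (n+1)} (hσ : ∀ x, σ x = 0)
    (τ : (Fin 2 → ZMod N) → Fin (n+1)) : HL n 2 N lam σ τ = 0 := by
  rw [HL_apply]
  refine Finset.sum_eq_zero fun e _ => ?_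
  unfold hedge embed
  rw [Matrix.of_apply]
  split_ifs
  · rw [hσ e.1, hσ (nbrT e.1 e.2)]
    exact hloc_vac _ _
  · rfl

end Aux6
section Aux7

open Finset

lemma cast_ite_sum {α : Type*} [Fintype α] (p : α → Prop) [DecidablePred p] (a b : ℤ) :
    ((∑ x, (if p x then a else b) : ℤ) : ℝ) = ∑ x, (if p x then (a:ℝ) else (b:ℝ)) := by
  push_cast
  exact Finset.sum_congr rfl fun x _ => by split_ifs <;> simp

lemma key_bound {n N : ℕ} [NeZero N] (hN : 1 < N) {δ : ℝ} (hδ0 : 0 < δ) (hδ1 : δ ≤ 1)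
    (hsmall : 16*δ^2 + 16*δ*((n:ℝ)+1) ≤ 1/2)
    {lam : Fin n → Fin 2 → ℝ}
    (hl : ∀ (i : Fin n) (k : Fin 2), 1/2 * δ^((i:ℕ)+1) ≤ lam i k ∧ lam i k ≤ 2*δ^((i:ℕ)+1))
    {γ : ℝ} (hγ0 : 0 < γ) (hγ : (γ:ℂ) ∈ spectrum ℂ (HL n 2 N lam)) :
    1/(2*((n:ℝ)+1)) ≤ γ := by
  have heig : Module.End.HasEigenvalue (Matrix.toLin' (HL n 2 N lam)) ((γ:ℂ)) := by
    rw [Module.End.hasEigenvalue_iff_mem_spectrum]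
    have h0 : Matrix.toLin' (HL n 2 N lam) = Matrix.toLinAlgEquiv' (HL n 2 N lam) := rfl
    rw [h0, AlgEquiv.spectrum_eq]
    exact hγ
  obtain ⟨σ, hσ⟩ := eigenvalue_mem_ball heig
  rw [Metric.mem_closedBall] at hσ
  have hdist : ‖(γ:ℂ) - HL n 2 N lam σ σ‖ ≤ ∑ τ ∈ Finset.univ.erase σ, ‖HL n 2 N lam σ τ‖ := by
    rw [dist_eq_norm] at hσ
    exact hσ
  by_cases hvac : ∀ x, σ x = 0
  · exfalso
    have hrow : ∀ τ, HL n 2 N lam σ τ = 0 := HL_vac_row lam hvac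
    have h1 : ∑ τ ∈ Finset.univ.erase σ, ‖HL n 2 N lam σ τ‖ = 0 :=
      Finset.sum_eq_zero fun τ _ => by rw [hrow, norm_zero]
    have h2 : ‖(γ:ℂ)‖ ≤ 0 := by
      calc ‖(γ:ℂ)‖ = ‖(γ:ℂ) - HL n 2 N lam σ σ‖ := by rw [hrow σ, sub_zero]
        _ ≤ 0 := h1 ▸ hdist
    have h3 : (γ:ℂ) = 0 := norm_le_zero_iff.mp h2
    have h4 : γ = 0 := by exact_mod_cast h3
    exact hγ0.ne' h4
  · push_neg at hvac
    obtain ⟨x0, hx0⟩ := hvac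
    set Pr : ℝ := ∑ x : Fin 2 → ZMod N, (if σ x = 0 then (0:ℝ) else 1) with hPrdef
    set Gr : ℝ := ∑ x : Fin 2 → ZMod N,
        (if σ x < σ (nbrT x 0) ∨ (σ x = σ (nbrT x 0) ∧ σ x ≠ 0) then (1:ℝ) else 0) with hGrdef
    have hPr0 : 0 ≤ Pr := Finset.sum_nonneg fun x _ => by split_ifs <;> norm_num
    have hGr0 : 0 ≤ Gr := Finset.sum_nonneg fun x _ => by split_ifs <;> norm_num
    have hPr1 : 1 ≤ Pr := by
      rw [hPrdef]
      calc (1:ℝ) = (if σ x0 = 0 then (0:ℝ) else 1) := by rw [if_neg hx0]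
        _ ≤ _ := Finset.single_le_sum (f := fun x => if σ x = 0 then (0:ℝ) else 1)
            (fun x _ => by split_ifs <;> norm_num) (Finset.mem_univ x0)
    have hcount : Pr ≤ ((n:ℝ)+1) * Gr := by
      have hz := good_count (n := n) (N := N) σ
      have hz' : (((∑ x : Fin 2 → ZMod N, (if σ x = 0 then (0:ℤ) else 1)) : ℤ) : ℝ)
          ≤ ((((n:ℤ)+1) * ∑ x : Fin 2 → ZMod N,
            (if σ x < σ (nbrT x 0) ∨ (σ x = σ (nbrT x 0) ∧ σ x ≠ 0) then (1:ℤ) else 0) : ℤ) : ℝ) :=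
        Int.cast_le.mpr hz
      rw [Int.cast_mul, cast_ite_sum, cast_ite_sum] at hz'
      push_cast at hz'
      rw [hPrdef, hGrdef]
      convert hz' using 2 <;> norm_num
    have hdiag : (1-16*δ^2) * Gr ≤ (HL n 2 N lam σ σ).re := HL_diag_lower hδ0 hδ1 hl σ
    have hrowb : ∑ τ ∈ Finset.univ.erase σ, ‖HL n 2 N lam σ τ‖ ≤ 16*δ*Pr :=
      HL_row_sum hN hδ0 hδ1 hl σ
    have hre : (HL n 2 N lam σ σ).re - γ ≤ 16*δ*Pr := by
      have h1 : (HL n 2 N lam σ σ).re - γ ≤ ‖(γ:ℂ) - HL n 2 N lam σ σ‖ := by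
        have h2 : ((γ:ℂ) - HL n 2 N lam σ σ).re = γ - (HL n 2 N lam σ σ).re := by
          rw [Complex.sub_re, Complex.ofReal_re]
        calc (HL n 2 N lam σ σ).re - γ ≤ |((γ:ℂ) - HL n 2 N lam σ σ).re| := by
              rw [h2]
              rw [abs_sub_comm γ _]
              exact le_abs_self _
          _ ≤ ‖(γ:ℂ) - HL n 2 N lam σ σ‖ := Complex.abs_re_le_norm _
      linarith [le_trans h1 (le_trans hdist hrowb)]
    -- final arithmetic
    have hn1 : (0:ℝ) < (n:ℝ)+1 := by positivity
    have hδ2 : (0:ℝ) ≤ 1 - 16*δ^2 := by nlinarith [sq_nonneg δ]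
    have k1 : (1-16*δ^2) * Gr - 16*δ*Pr ≤ γ := by linarith
    have hint1 : (1-16*δ^2) * Pr ≤ (1-16*δ^2) * (((n:ℝ)+1) * Gr) :=
      mul_le_mul_of_nonneg_left hcount hδ2
    have hint2 : Pr * (16*δ^2 + 16*δ*((n:ℝ)+1)) ≤ Pr * (1/2) :=
      mul_le_mul_of_nonneg_left hsmall hPr0
    have hint3 : (2*((n:ℝ)+1)) * ((1-16*δ^2) * Gr - 16*δ*Pr) ≤ (2*((n:ℝ)+1)) * γ :=
      mul_le_mul_of_nonneg_left k1 (by positivity)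
    rw [div_le_iff₀ (by positivity : (0:ℝ) < 2*((n:ℝ)+1))]
    nlinarith [hint1, hint2, hint3, hPr1, hGr0, hδ0.le, hn1]

lemma spec_pos_nonempty {n N : ℕ} [NeZero N] (hn : 0 < n) {δ : ℝ} (hδ0 : 0 < δ) (hδ1 : δ ≤ 1)
    (h16 : 16*δ^2 < 1) {lam : Fin n → Fin 2 → ℝ}
    (hl : ∀ (i : Fin n) (k : Fin 2), 1/2 * δ^((i:ℕ)+1) ≤ lam i k ∧ lam i k ≤ 2*δ^((i:ℕ)+1)) :
    ∃ γ : ℝ, 0 < γ ∧ (γ:ℂ) ∈ spectrum ℂ (HL n 2 N lam) := by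
  have hA : (HL n 2 N lam).IsHermitian := HL_isHermitian lam
  set U : Matrix ((Fin 2 → ZMod N) → Fin (n+1)) ((Fin 2 → ZMod N) → Fin (n+1)) ℂ :=
    ((hA.eigenvectorUnitary :
      Matrix.unitaryGroup ((Fin 2 → ZMod N) → Fin (n+1)) ℂ) :
      Matrix ((Fin 2 → ZMod N) → Fin (n+1)) ((Fin 2 → ZMod N) → Fin (n+1)) ℂ) with hU
  have htr : Matrix.trace (HL n 2 N lam)
      = ∑ i, ((hA.eigenvalues i : ℝ) : ℂ) := by
    calc Matrix.trace (HL n 2 N lam)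
        = Matrix.trace (U * Matrix.diagonal (RCLike.ofReal ∘ hA.eigenvalues) * star U) := by
          exact congrArg Matrix.trace hA.spectral_theorem
      _ = Matrix.trace (star U * U * Matrix.diagonal (RCLike.ofReal ∘ hA.eigenvalues)) :=
          Matrix.trace_mul_cycle _ _ _
      _ = Matrix.trace (Matrix.diagonal (RCLike.ofReal ∘ hA.eigenvalues)) := by
          rw [Matrix.mem_unitaryGroup_iff'.mp (hA.eigenvectorUnitary).2, one_mul]
      _ = ∑ i, ((hA.eigenvalues i : ℝ) : ℂ) := by
          rw [Matrix.trace_diagonal]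
          rfl
  have htr_re : (Matrix.trace (HL n 2 N lam)).re = ∑ i, hA.eigenvalues i := by
    rw [htr, Complex.re_sum]
    exact Finset.sum_congr rfl fun i _ => Complex.ofReal_re _
  have htrace_diag : (Matrix.trace (HL n 2 N lam)).re
      = ∑ σ : (Fin 2 → ZMod N) → Fin (n+1), (HL n 2 N lam σ σ).re := by
    rw [Matrix.trace, Complex.re_sum]
    rfl
  set σstar : (Fin 2 → ZMod N) → Fin (n+1) := fun _ => Fin.succ ⟨0, hn⟩ with hσstar
  have hgood : ∀ x : Fin 2 → ZMod N,
      σstar x < σstar (nbrT x 0) ∨ (σstar x = σstar (nbrT x 0) ∧ σstar x ≠ 0) :=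
    fun x => Or.inr ⟨rfl, Fin.succ_ne_zero _⟩
  have hcard : (1:ℝ) ≤ ∑ x : Fin 2 → ZMod N,
      (if σstar x < σstar (nbrT x 0) ∨ (σstar x = σstar (nbrT x 0) ∧ σstar x ≠ 0)
        then (1:ℝ) else 0) := by
    have hx : ∀ x : Fin 2 → ZMod N, (if σstar x < σstar (nbrT x 0)
        ∨ (σstar x = σstar (nbrT x 0) ∧ σstar x ≠ 0) then (1:ℝ) else 0) = 1 :=
      fun x => if_pos (hgood x)
    rw [Finset.sum_congr rfl fun x _ => hx x, Finset.sum_const, nsmul_eq_mul, mul_one]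
    have : 0 < Fintype.card (Fin 2 → ZMod N) := Fintype.card_pos
    exact_mod_cast this
  have hterm : 1 - 16*δ^2 ≤ (HL n 2 N lam σstar σstar).re := by
    have h1 := HL_diag_lower hδ0 hδ1 hl σstar
    nlinarith [hcard, h1]
  have hpos : 0 < (Matrix.trace (HL n 2 N lam)).re := by
    rw [htrace_diag]
    have h2 : (HL n 2 N lam σstar σstar).re
        ≤ ∑ σ : (Fin 2 → ZMod N) → Fin (n+1), (HL n 2 N lam σ σ).re :=
      Finset.single_le_sum (f := fun σ => (HL n 2 N lam σ σ).re)
        (fun σ _ => HL_diag_re_nonneg lam σ) (Finset.mem_univ σstar)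
    linarith
  obtain ⟨i0, hi0⟩ : ∃ i, 0 < hA.eigenvalues i := by
    by_contra hc
    push_neg at hc
    have hle : (∑ i, hA.eigenvalues i) ≤ 0 := Finset.sum_nonpos fun i _ => hc i
    rw [htr_re] at hpos
    linarith
  refine ⟨hA.eigenvalues i0, hi0, ?_⟩
  have h2 := hA.eigenvalues_mem_spectrum_real i0
  have h3 := spectrum.algebraMap_mem ℂ h2
  rwa [show (algebraMap ℝ ℂ) (hA.eigenvalues i0) = ((hA.eigenvalues i0 : ℝ) : ℂ) from rfl] at h3

end Aux7
/-- Fix the PVBS model in dimension `d = 2` with `n ≥ 1` species. If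
`0 < δ < (1 − 3/(16n))/(96 n² (16n+1)²)` and the anisotropy parameters satisfy
`(1/2)δ^i ≤ λ_i^{(k)} ≤ 2δ^i` for all `1 ≤ i ≤ n`, `k ∈ {1,2}`, then `H_L` is gapped:
`inf_{L ≥ 2} γ_L > 0`. -/
theorem pvbs_spectral_gap_two_dim (n : ℕ) (hn : 1 ≤ n) (δ : ℝ) (hδ0 : 0 < δ)
    (hδ : δ < (1 - 3 / (16 * (n : ℝ))) / (96 * (n : ℝ) ^ 2 * (16 * (n : ℝ) + 1) ^ 2))
    (lam : Fin n → Fin 2 → ℝ)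
    (hlam : ∀ (i : Fin n) (k : Fin 2),
      1 / 2 * δ ^ ((i : ℕ) + 1) ≤ lam i k ∧ lam i k ≤ 2 * δ ^ ((i : ℕ) + 1)) :
    ∃ g : ℝ, 0 < g ∧
      ∀ (L : ℕ) [NeZero (2 * L)], 2 ≤ L → g ≤ gap (HL n 2 (2 * L) lam) := by
  have hn' : (1:ℝ) ≤ (n:ℝ) := by exact_mod_cast hn
  have hnpos : (0:ℝ) < (n:ℝ) := by linarith
  have hDpos : (0:ℝ) < 96*(n:ℝ)^2*(16*(n:ℝ)+1)^2 := by
    have h1 : (0:ℝ) < 16*(n:ℝ)+1 := by linarith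
    positivity
  have hδD : δ * (96*(n:ℝ)^2*(16*(n:ℝ)+1)^2) < 1 := by
    have h1 := (lt_div_iff₀ hDpos).mp hδ
    have h2 : (0:ℝ) ≤ 3/(16*(n:ℝ)) := by positivity
    linarith
  have h17 : (17:ℝ) ≤ 16*(n:ℝ)+1 := by linarith
  have h289 : (289:ℝ) ≤ (16*(n:ℝ)+1)^2 := by nlinarith
  have hkey1 : δ * (27744*(n:ℝ)^2) ≤ 1 := by
    have h5 : δ*(96*(n:ℝ)^2*289) ≤ δ*(96*(n:ℝ)^2*(16*(n:ℝ)+1)^2) := by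
      apply mul_le_mul_of_nonneg_left _ hδ0.le
      have : (0:ℝ) ≤ 96*(n:ℝ)^2 := by positivity
      nlinarith
    nlinarith
  have hδn : δ * (n:ℝ) ≤ 1/27744 := by nlinarith
  have hδ1' : δ ≤ 1/27744 := by nlinarith
  have hδ1 : δ ≤ 1 := by linarith
  have hδsq : δ^2 ≤ δ := by nlinarith
  have hsmall : 16*δ^2 + 16*δ*((n:ℝ)+1) ≤ 1/2 := by nlinarith
  have h16 : 16*δ^2 < 1 := by nlinarith
  refine ⟨1/(2*((n:ℝ)+1)), by positivity, ?_⟩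
  intro L _ hL
  have hN : 1 < 2*L := by omega
  unfold gap
  apply le_csInf
  · obtain ⟨γ0, hγ1, hγ2⟩ := spec_pos_nonempty (N := 2*L) (by omega : 0 < n) hδ0 hδ1 h16 hlam
    exact ⟨γ0, hγ1, hγ2⟩
  · rintro b ⟨hb1, hb2⟩
    exact key_bound hN hδ0 hδ1 hsmall hlam hb1 hb2

end PVBS
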